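/- If the quadratic form X ↦ X^T P X on K^n is non-isotropic for some P ∈ GL_n(K), then for every alternating matrix A ∈ Alt_n(K) and every nonzero λ ∈ K, the matrix PA − λI_n is invertible. -/
import Mathlib


open scoped Matrix

lemma alt_quad_zero {K : Type*} [Field K] {n : ℕ}
    (A : Matrix (Fin n) (Fin n) K) (hAlt : Aᵀ = -A) (hdiag : ∀ i, A i i = 0)
    (v : Fin n → K) : v ⬝ᵥ A.mulVec v = 0 := by
  have hA : ∀ i j, A j i = - A i j := by
    intro i j
    have := congrFun (congrFun hAlt i) j
    simpa [Matrix.transpose_apply, Matrix.neg_apply] using this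
  have : v ⬝ᵥ A.mulVec v = ∑ p ∈ Finset.univ ×ˢ Finset.univ,
      v p.1 * A p.1 p.2 * v p.2 := by
    rw [Finset.sum_product]
    simp [dotProduct, Matrix.mulVec, Finset.mul_sum, mul_assoc]
  rw [this]
  refine Finset.sum_ninvolution (fun p => (p.2, p.1)) ?_ ?_ (fun _ => by simp) (fun _ => rfl)
  · intro ⟨i, j⟩
    simp only
    rw [hA i j]
    ring
  · intro ⟨i, j⟩ h hij
    apply h
    have : i = j := (Prod.ext_iff.1 hij).2
    subst this
    simp [hdiag]

theorem stmt_7 {K : Type*} [Field K] {n : ℕ}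
    (P : Matrix (Fin n) (Fin n) K) (hP : IsUnit P)
    (hiso : ∀ X : Fin n → K, X ⬝ᵥ P.mulVec X = 0 → X = 0) :
    ∀ A : Matrix (Fin n) (Fin n) K, Aᵀ = -A → (∀ i, A i i = 0) →
      ∀ μ : K, μ ≠ 0 → IsUnit (P * A - μ • (1 : Matrix (Fin n) (Fin n) K)) := by
  intro A hAlt hdiag μ hμ
  by_contra hnot
  rw [Matrix.isUnit_iff_isUnit_det, isUnit_iff_ne_zero, not_not] at hnot
  obtain ⟨X, hX0, hX⟩ := (Matrix.exists_mulVec_eq_zero_iff).2 hnot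
  have hPAX : P.mulVec (A.mulVec X) = μ • X := by
    have := hX
    rw [Matrix.sub_mulVec, sub_eq_zero] at this
    rw [Matrix.mulVec_mulVec, this]
    simp [Matrix.smul_mulVec]
  have hAX : A.mulVec X = 0 := by
    apply hiso
    rw [hPAX]
    have h1 : A.mulVec X ⬝ᵥ μ • X = μ * (A.mulVec X ⬝ᵥ X) := by
      simp [dotProduct_smul, smul_eq_mul]
    rw [h1, dotProduct_comm, alt_quad_zero A hAlt hdiag X, mul_zero]
  rw [hAX, Matrix.mulVec_zero] at hPAX
  apply hX0
  have := hPAX.symm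
  funext i
  have h := congrFun this i
  simpa [hμ] using h
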